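/- arXiv:1410.4391 — 3 statements merged into one kernel-verified Lean document; each statement's English description precedes it below -/
import Mathlib

section
/- Let n ≥ 1 and d ≥ 1 be integers, let R_1, …, R_d : Fin n → ℝ be rankings, and set P(i) = ∏_{j=1}^d R_j(i). Let v : Fin n → ℝ be a fixed list of rank values and suppose R = v ∘ τ for some permutation τ of Fin n such that R and P monovary (i.e., P(i) < P(k) implies R(i) ≤ R(k)). Define, for any G : Fin n → ℝ, the empirical multivariate Spearman correlation ρ_n(G; R_1,…,R_d) = h(d+1)·[(2^{d+1}/n)·∑_{i} G(i)·∏_{j=1}^d R_j(i) − 1], where h(d+1) = (d+2)/(2^{d+1} − (d+2)) > 0. Then for every permutation π of Fin n, ρ_n(v ∘ π; R_1,…,R_d) ≤ ρ_n(R; R_1,…,R_d); that is, the ranking ordered like the product (geometric mean) of the R_j maximises multivariate Spearman's ρ among all rankings with the given value set. -/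
lemma pow_aux : ∀ d : ℕ, 1 ≤ d → (d : ℝ) + 2 < (2 : ℝ) ^ (d + 1) := by
  intro d hd
  obtain ⟨e, rfl⟩ := Nat.exists_eq_add_of_le hd
  induction e with
  | zero => norm_num
  | succ k ih =>
      have h1 : (2 : ℝ) ^ (1 + (k + 1) + 1) = 2 * 2 ^ (1 + k + 1) := by ring
      have ih' := ih (by omega)
      push_cast at ih' ⊢
      rw [h1]
      nlinarith


/-- The ranking ordered like the product (geometric mean) of the expert rankings
maximises the empirical multivariate Spearman correlation
`ρ_n(G) = h(d+1)·[(2^{d+1}/n)·∑_i G(i)·∏_j R_j(i) − 1]` among all rankings with the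
given value set `v`. -/
theorem stmt_7 (n d : ℕ) (hn : 1 ≤ n) (hd : 1 ≤ d)
    (R : Fin d → Fin n → ℝ) (P : Fin n → ℝ) (hP : P = fun i => ∏ j, R j i)
    (v : Fin n → ℝ) (τ : Equiv.Perm (Fin n))
    (Rag : Fin n → ℝ) (hRag : Rag = v ∘ τ)
    (hmono : ∀ i k, P i < P k → Rag i ≤ Rag k)
    (ρ : (Fin n → ℝ) → ℝ)
    (hρ : ρ = fun G => ((d : ℝ) + 2) / ((2 : ℝ) ^ (d + 1) - ((d : ℝ) + 2)) *
        ((2 : ℝ) ^ (d + 1) / (n : ℝ) * (∑ i, G i * ∏ j, R j i) - 1)) :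
    ∀ π : Equiv.Perm (Fin n), ρ (v ∘ π) ≤ ρ Rag := by
  intro π
  have hmv : Monovary Rag P := fun _i _k h => hmono _ _ h
  set σ : Equiv.Perm (Fin n) := τ⁻¹ * π with hσ
  have hcomp : v ∘ π = Rag ∘ σ := by
    funext i
    simp [hRag, hσ, Equiv.Perm.mul_apply]
  have hsum : ∑ i, (v ∘ π) i * P i ≤ ∑ i, Rag i * P i := by
    rw [hcomp]
    simpa [smul_eq_mul] using hmv.sum_comp_perm_smul_le_sum_smul (σ := σ)
  have hsum' : ∑ i, (v ∘ π) i * ∏ j, R j i ≤ ∑ i, Rag i * ∏ j, R j i := by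
    simpa [hP] using hsum
  have hpow : ((d : ℝ) + 2) < (2 : ℝ) ^ (d + 1) := pow_aux d hd
  have hfac : 0 < ((d : ℝ) + 2) / ((2 : ℝ) ^ (d + 1) - ((d : ℝ) + 2)) := by
    apply div_pos <;> [positivity; linarith]
  have hn' : (0 : ℝ) < (2 : ℝ) ^ (d + 1) / (n : ℝ) := by
    have : (0 : ℝ) < n := by exact_mod_cast hn
    positivity
  rw [hρ]
  dsimp only
  apply mul_le_mul_of_nonneg_left _ hfac.le
  have := mul_le_mul_of_nonneg_left hsum' hn'.le
  linarith
end

section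
/- Let n ≥ 1 and d ≥ 1 be integers, let R_1, …, R_d : Fin n → ℝ be rankings, and set P(i) = ∏_{j=1}^d R_j(i). Let v : Fin n → ℝ be a fixed list of rank values and suppose R = v ∘ τ for some permutation τ of Fin n such that R and P antivary (i.e., P(i) < P(k) implies R(k) ≤ R(i)). Then for every permutation π of Fin n, ρ_n(v ∘ π; R_1,…,R_d) ≥ ρ_n(R; R_1,…,R_d), where ρ_n(G; R_1,…,R_d) = h(d+1)·[(2^{d+1}/n)·∑_{i} G(i)·∏_{j=1}^d R_j(i) − 1] and h(d+1) = (d+2)/(2^{d+1} − (d+2)) > 0; that is, the ranking ordered oppositely to the product of the R_j minimises multivariate Spearman's ρ among all rankings with the given value set. -/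
lemma aux_pow (d : ℕ) (hd : 1 ≤ d) : d + 2 < 2 ^ (d + 1) := by
  induction d with
  | zero => omega
  | succ k ih =>
    rcases Nat.eq_or_lt_of_le hd with h | h
    · simp [← h]
    · have := ih (by omega)
      have : 2 ^ (k + 1) ≤ 2 ^ (k + 2) := Nat.pow_le_pow_right (by norm_num) (by omega)
      omega

/-- The ranking ordered oppositely to the product of the expert rankings minimises the
empirical multivariate Spearman correlation
`ρ_n(G) = h(d+1)·[(2^{d+1}/n)·∑_i G(i)·∏_j R_j(i) − 1]` among all rankings with the
given value set `v`. -/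
theorem stmt_8 (n d : ℕ) (hn : 1 ≤ n) (hd : 1 ≤ d)
    (R : Fin d → Fin n → ℝ) (P : Fin n → ℝ) (hP : P = fun i => ∏ j, R j i)
    (v : Fin n → ℝ) (τ : Equiv.Perm (Fin n))
    (Rag : Fin n → ℝ) (hRag : Rag = v ∘ τ)
    (hanti : ∀ i k, P i < P k → Rag k ≤ Rag i)
    (ρ : (Fin n → ℝ) → ℝ)
    (hρ : ρ = fun G => ((d : ℝ) + 2) / ((2 : ℝ) ^ (d + 1) - ((d : ℝ) + 2)) *
        ((2 : ℝ) ^ (d + 1) / (n : ℝ) * (∑ i, G i * ∏ j, R j i) - 1)) :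
    ∀ π : Equiv.Perm (Fin n), ρ Rag ≤ ρ (v ∘ π) := by
  intro π
  have hAv : Antivary Rag P := fun i k h => hanti _ _ h
  set σ : Equiv.Perm (Fin n) := π.trans τ.symm with hσ
  have hkey : ∑ i, Rag i * P i ≤ ∑ i, Rag (σ i) * P i := by
    have := hAv.sum_smul_le_sum_comp_perm_smul (σ := σ)
    simpa [smul_eq_mul] using this
  have hcomp : ∀ i, Rag (σ i) = (v ∘ π) i := by
    intro i; simp [hRag, hσ]
  have hsum : ∑ i, Rag i * ∏ j, R j i ≤ ∑ i, (v ∘ π) i * ∏ j, R j i := by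
    calc ∑ i, Rag i * ∏ j, R j i = ∑ i, Rag i * P i := by simp [hP]
    _ ≤ ∑ i, Rag (σ i) * P i := hkey
    _ = ∑ i, (v ∘ π) i * ∏ j, R j i := by simp [hcomp, hP]
  have hdlt : ((d : ℝ) + 2) < (2 : ℝ) ^ (d + 1) := by
    have := aux_pow d hd
    exact_mod_cast (by exact_mod_cast this : ((d + 2 : ℕ) : ℝ) < ((2 ^ (d + 1) : ℕ) : ℝ))
  have h1 : (0 : ℝ) ≤ ((d : ℝ) + 2) / ((2 : ℝ) ^ (d + 1) - ((d : ℝ) + 2)) := by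
    apply div_nonneg <;> [positivity; linarith]
  have h2 : (0 : ℝ) ≤ (2 : ℝ) ^ (d + 1) / (n : ℝ) := by positivity
  rw [hρ]
  dsimp only
  gcongr
end

section
/- Let Ω ⊆ Ω' be finite sets with r = |Ω| ≥ 1 and r' = |Ω'| ≥ 1, let R : Ω → ℝ, and let m = (1/r)·∑_{x∈Ω} R(x) be the mean of R. Define R' : Ω' → ℝ by R'(x) = (r/r')·R(x) for x ∈ Ω and R'(x) = (r + r')/(2r') for x ∈ Ω' \ Ω. Then the mean of R' satisfies (1/r')·∑_{x∈Ω'} R'(x) = (r²(2m − 1) + r'²)/(2r'²). In particular, if m = 1/2 then the mean of R' is also 1/2, so the non-informative extension is strictly consistent (mean-preserving) when the mean rank is 1/2. -/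
/-- The mean of the non-informative extension `R'` of `R` from `Ω` to `Ω'` equals
`(r²(2m − 1) + r'²)/(2r'²)` where `m` is the mean of `R`; in particular if `m = 1/2`
then the mean of `R'` is also `1/2` (the extension is strictly consistent). -/
theorem stmt_10 {α : Type*} (Ω Ω' : Finset α) (hsub : Ω ⊆ Ω')
    (hr : 1 ≤ Ω.card) (hr' : 1 ≤ Ω'.card)
    (R : α → ℝ) (m : ℝ) (hm : m = 1 / (Ω.card : ℝ) * ∑ x ∈ Ω, R x)
    (R' : α → ℝ)
    (hmem : ∀ x ∈ Ω, R' x = (Ω.card : ℝ) / (Ω'.card : ℝ) * R x)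
    (hnot : ∀ x ∈ Ω', x ∉ Ω → R' x = ((Ω.card : ℝ) + (Ω'.card : ℝ)) / (2 * (Ω'.card : ℝ))) :
    1 / (Ω'.card : ℝ) * ∑ x ∈ Ω', R' x
      = ((Ω.card : ℝ) ^ 2 * (2 * m - 1) + (Ω'.card : ℝ) ^ 2) / (2 * (Ω'.card : ℝ) ^ 2)
    ∧ (m = 1 / 2 → 1 / (Ω'.card : ℝ) * ∑ x ∈ Ω', R' x = 1 / 2) := by
  classical
  have hr0 : (Ω.card : ℝ) ≠ 0 := by positivity
  have hr'0 : (Ω'.card : ℝ) ≠ 0 := by positivity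
  have hS : ∑ x ∈ Ω, R x = m * Ω.card := by
    rw [hm]; field_simp
  have hsplit : ∑ x ∈ Ω', R' x = ∑ x ∈ Ω, R' x + ∑ x ∈ Ω' \ Ω, R' x := by
    rw [add_comm, Finset.sum_sdiff hsub]
  have h1 : ∑ x ∈ Ω, R' x = (Ω.card : ℝ) / (Ω'.card : ℝ) * (m * Ω.card) := by
    rw [← hS, Finset.mul_sum]
    exact Finset.sum_congr rfl hmem
  have h2 : ∑ x ∈ Ω' \ Ω, R' x
      = ((Ω'.card : ℝ) - Ω.card) * (((Ω.card : ℝ) + (Ω'.card : ℝ)) / (2 * (Ω'.card : ℝ))) := by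
    rw [Finset.sum_congr rfl (fun x hx => hnot x (Finset.mem_sdiff.mp hx).1
      (Finset.mem_sdiff.mp hx).2), Finset.sum_const, Finset.card_sdiff_of_subset hsub, nsmul_eq_mul,
      Nat.cast_sub (Finset.card_le_card hsub)]
  have key : 1 / (Ω'.card : ℝ) * ∑ x ∈ Ω', R' x
      = ((Ω.card : ℝ) ^ 2 * (2 * m - 1) + (Ω'.card : ℝ) ^ 2) / (2 * (Ω'.card : ℝ) ^ 2) := by
    rw [hsplit, h1, h2]; field_simp; ring
  exact ⟨key, fun hm2 => by rw [key, hm2]; field_simp; ring⟩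
end
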